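/- Let Γ be a finite group and Q ⊆ P' ⊆ P a chain of induced Γ-subposets of a Γ-poset P, and suppose that P strongly Γ-collapses to P'. Then P strongly Γ-collapses to Q if and only if P' strongly Γ-collapses to Q. -/

import Mathlib

/-- A Γ-equivariant order-preserving self-map of the Γ-poset `P`, regarded as a map of the
induced subposet `A`, which fixes every point of `Q` (an element of `Def_Γ(A, Q)`). -/
def IsDefPosetMap (Γ : Type*) [Group Γ] {P : Type*} [PartialOrder P] [MulAction Γ P]
    (A Q : Set P) (f : P → P) : Prop :=
  Set.MapsTo f A A ∧ (∀ x ∈ A, ∀ y ∈ A, x ≤ y → f x ≤ f y) ∧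
    (∀ γ : Γ, ∀ x ∈ A, f (γ • x) = γ • f x) ∧ ∀ y ∈ Q, f y = y

/-- One step of a zigzag in `Def_Γ(A, Q)`: both maps belong to `Def_Γ(A, Q)` and they are
comparable in the pointwise order (on `A`). -/
def posetDefStep (Γ : Type*) [Group Γ] {P : Type*} [PartialOrder P] [MulAction Γ P]
    (A Q : Set P) (f g : P → P) : Prop :=
  IsDefPosetMap Γ A Q f ∧ IsDefPosetMap Γ A Q g ∧
    ((∀ x ∈ A, f x ≤ g x) ∨ (∀ x ∈ A, g x ≤ f x))

/-- The induced Γ-subposet `A` of `P` strongly Γ-collapses to `Q ⊆ A`: there is a map `f` in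
`Def_Γ(A, Q)`, joined to the identity by a finite zigzag of pairwise comparable elements of
`Def_Γ(A, Q)`, whose image (on `A`) is contained in `Q`.  Taking `A = Set.univ` gives the
notion "`P` strongly Γ-collapses to `Q`". -/
def StronglyCollapsesOn (Γ : Type*) [Group Γ] {P : Type*} [PartialOrder P] [MulAction Γ P]
    (A Q : Set P) : Prop :=
  ∃ f : P → P, IsDefPosetMap Γ A Q f ∧
    Relation.ReflTransGen (posetDefStep Γ A Q) id f ∧ ∀ x ∈ A, f x ∈ Q

section Aux

variable {Γ P : Type*} [Group Γ] [PartialOrder P] [MulAction Γ P]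

/-- If `r ∈ Def_Γ(univ, P')` with image in `P'`, composing on the right with `r` sends
`Def_Γ(P', Q)` into `Def_Γ(univ, Q)` (for `Q ⊆ P'`). -/
lemma aux_comp_right {Q P' : Set P} (hQP' : Q ⊆ P') {r : P → P}
    (hr : IsDefPosetMap Γ Set.univ P' r) (him : ∀ x, r x ∈ P')
    {g : P → P} (hg : IsDefPosetMap Γ P' Q g) :
    IsDefPosetMap Γ Set.univ Q (g ∘ r) := by
  obtain ⟨-, hrmono, hrequiv, hrfix⟩ := hr
  obtain ⟨-, hgmono, hgequiv, hgfix⟩ := hg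
  refine ⟨fun x _ => trivial, ?_, ?_, ?_⟩
  · intro x _ y _ hxy
    exact hgmono _ (him x) _ (him y) (hrmono x trivial y trivial hxy)
  · intro γ x _
    simp only [Function.comp_apply]
    rw [hrequiv γ x trivial, hgequiv γ (r x) (him x)]
  · intro y hy
    simp only [Function.comp_apply, hrfix y (hQP' hy), hgfix y hy]

/-- If `r ∈ Def_Γ(univ, P')`, composing on the left with `r` sends
`Def_Γ(univ, Q)` into `Def_Γ(P', Q)` (for `Q ⊆ P'`). -/
lemma aux_comp_left {Q P' : Set P} (hQP' : Q ⊆ P') {r : P → P}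
    (hr : IsDefPosetMap Γ Set.univ P' r) (him : ∀ x, r x ∈ P')
    {f : P → P} (hf : IsDefPosetMap Γ Set.univ Q f) :
    IsDefPosetMap Γ P' Q (r ∘ f) := by
  obtain ⟨-, hrmono, hrequiv, hrfix⟩ := hr
  obtain ⟨-, hfmono, hfequiv, hffix⟩ := hf
  refine ⟨fun x _ => him _, ?_, ?_, ?_⟩
  · intro x _ y _ hxy
    exact hrmono _ trivial _ trivial (hfmono x trivial y trivial hxy)
  · intro γ x _
    simp only [Function.comp_apply]
    rw [hfequiv γ x trivial, hrequiv γ (f x) trivial]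
  · intro y hy
    simp only [Function.comp_apply, hffix y hy, hrfix y (hQP' hy)]

end Aux

/-- Let Γ be a finite group and Q ⊆ P' ⊆ P a chain of induced Γ-subposets of a
Γ-poset P, and suppose that P strongly Γ-collapses to P'.  Then P strongly Γ-collapses to Q if
and only if P' strongly Γ-collapses to Q. -/
theorem stronglyCollapses_iff_of_stronglyCollapses {Γ P : Type*} [Group Γ] [Finite Γ]
    [PartialOrder P] [MulAction Γ P] (hmono : ∀ γ : Γ, Monotone fun x : P => γ • x)
    (Q P' : Set P) (hQP' : Q ⊆ P')
    (hQinv : ∀ γ : Γ, ∀ x ∈ Q, γ • x ∈ Q) (hP'inv : ∀ γ : Γ, ∀ x ∈ P', γ • x ∈ P')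
    (hcol : StronglyCollapsesOn Γ Set.univ P') :
    StronglyCollapsesOn Γ Set.univ Q ↔ StronglyCollapsesOn Γ P' Q := by
  obtain ⟨r, hr, hchain, him⟩ := hcol
  have him' : ∀ x, r x ∈ P' := fun x => him x trivial
  have hrfixQ : ∀ y ∈ Q, r y = y := fun y hy => hr.2.2.2 y (hQP' hy)
  -- `r` as an element of `Def_Γ(P', Q)`
  have hrP'Q : IsDefPosetMap Γ P' Q r :=
    ⟨fun x _ => him' x, fun x _ y _ h => hr.2.1 x trivial y trivial h,
      fun γ x _ => hr.2.2.1 γ x trivial, hrfixQ⟩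
  have hidP'Q : IsDefPosetMap Γ P' Q (id : P → P) :=
    ⟨fun x hx => hx, fun x _ y _ h => h, fun _ _ _ => rfl, fun _ _ => rfl⟩
  constructor
  · rintro ⟨f, hf, hfchain, hfim⟩
    refine ⟨r ∘ f, aux_comp_left hQP' hr him' hf, ?_, ?_⟩
    · have hstep : posetDefStep Γ P' Q id r := by
        refine ⟨hidP'Q, hrP'Q, Or.inl fun x hx => ?_⟩
        simp [hr.2.2.2 x hx]
      have hlift : Relation.ReflTransGen (posetDefStep Γ P' Q) (r ∘ id) (r ∘ f) := by
        refine Relation.ReflTransGen.lift (fun g => r ∘ g) ?_ _ _ hfchain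
        rintro a b ⟨ha, hb, hab⟩
        refine ⟨aux_comp_left hQP' hr him' ha, aux_comp_left hQP' hr him' hb, ?_⟩
        rcases hab with h | h
        · exact Or.inl fun x _ => hr.2.1 _ trivial _ trivial (h x trivial)
        · exact Or.inr fun x _ => hr.2.1 _ trivial _ trivial (h x trivial)
      exact Relation.ReflTransGen.head hstep hlift
    · intro x hx
      have : f x ∈ Q := hfim x trivial
      simpa [Function.comp, hrfixQ _ this] using this
  · rintro ⟨g, hg, hgchain, hgim⟩
    refine ⟨g ∘ r, aux_comp_right hQP' hr him' hg, ?_, ?_⟩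
    · have h1 : Relation.ReflTransGen (posetDefStep Γ Set.univ Q) id r := by
        refine Relation.ReflTransGen.mono ?_ _ _ hchain
        rintro a b ⟨ha, hb, hab⟩
        have weak : ∀ {c : P → P}, IsDefPosetMap Γ Set.univ P' c →
            IsDefPosetMap Γ Set.univ Q c := fun hc =>
          ⟨hc.1, hc.2.1, hc.2.2.1, fun y hy => hc.2.2.2 y (hQP' hy)⟩
        exact ⟨weak ha, weak hb, hab⟩
      have hlift : Relation.ReflTransGen (posetDefStep Γ Set.univ Q) (id ∘ r) (g ∘ r) := by
        refine Relation.ReflTransGen.lift (fun h => h ∘ r) ?_ _ _ hgchain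
        rintro a b ⟨ha, hb, hab⟩
        refine ⟨aux_comp_right hQP' hr him' ha, aux_comp_right hQP' hr him' hb, ?_⟩
        rcases hab with h | h
        · exact Or.inl fun x _ => h (r x) (him' x)
        · exact Or.inr fun x _ => h (r x) (him' x)
      exact h1.trans hlift
    · intro x _
      exact hgim (r x) (him' x)
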